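/- Let K be an imaginary quadratic field with ring of integers O_K, let N be a positive integer, f = N·O_K, and π_f : O_K → O_K/f the canonical projection. Define the homomorphism Ψ̃_f : (O_K/f)^× → I_K(f)/P_{K,Z}(f) sending x + f to the class of the principal ideal xO_K. Then the kernel of Ψ̃_f equals π_f(O_K^×) · π_f(Z)^×, i.e., the subgroup generated by images of units of O_K and images of integers prime to N. -/

import Mathlib

open NumberField
open scoped nonZeroDivisors

set_option linter.unusedSectionVars false
set_option synthInstance.maxHeartbeats 1000000
set_option maxHeartbeats 1000000

/-- The subgroup `P_{K,ℤ}(f)` of the group of invertible fractional ideals: generated by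
principal ideals `xO_K` with `x ≡ n (mod f)` for some rational integer `n` prime to `N`. -/
noncomputable def PKZ (K : Type*) [Field K] [NumberField K] (N : ℕ) :
    Subgroup (FractionalIdeal (𝓞 K)⁰ K)ˣ :=
  Subgroup.closure {J | ∃ x : 𝓞 K, ∃ hx : (algebraMap (𝓞 K) K x : K) ≠ 0, ∃ n : ℤ,
    IsCoprime n (N : ℤ) ∧
    Ideal.Quotient.mk (Ideal.span {(N : 𝓞 K)}) x = ((n : 𝓞 K) : 𝓞 K ⧸ Ideal.span {(N : 𝓞 K)}) ∧
    J = toPrincipalIdeal (𝓞 K) K (Units.mk0 _ hx)}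

section Aux

variable (K : Type*) [Field K] [NumberField K] (N : ℕ)

local notation "π" => Ideal.Quotient.mk (Ideal.span {(N : 𝓞 K)})

lemma bezout_inv {n : ℤ} (h : IsCoprime n (N : ℤ)) :
    ∃ c : ℤ, IsCoprime c (N : ℤ) ∧ π ((c : 𝓞 K) * (n : 𝓞 K)) = 1 := by
  obtain ⟨p, q, hpq⟩ := h
  refine ⟨p, ⟨n, q, by linarith⟩, ?_⟩
  have hN0 : π ((N : 𝓞 K)) = 0 :=
    Ideal.Quotient.eq_zero_iff_mem.2 (Ideal.mem_span_singleton_self _)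
  have hc : ((p : 𝓞 K) * (n : 𝓞 K)) = 1 - (q : 𝓞 K) * (N : 𝓞 K) := by
    have := congrArg (fun z : ℤ => ((z : 𝓞 K))) hpq
    push_cast at this
    linear_combination this
  rw [hc, map_sub, map_mul, hN0, mul_zero, sub_zero, map_one]

lemma isUnit_int_mk {n : ℤ} (h : IsCoprime n (N : ℤ)) : IsUnit (π ((n : 𝓞 K))) := by
  obtain ⟨c, -, hc⟩ := bezout_inv K N h
  refine IsUnit.of_mul_eq_one (π ((c : 𝓞 K))) ?_
  rw [← map_mul, mul_comm]; exact hc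

/-- Auxiliary subgroup of `Kˣ`: elements `z = a/b` with `a ≡ u·n·b (mod N)`. -/
noncomputable def Cgrp : Subgroup Kˣ where
  carrier := {z | ∃ a b : 𝓞 K, ∃ u : (𝓞 K)ˣ, ∃ n : ℤ, IsCoprime n (N : ℤ) ∧
    IsUnit (π b) ∧ (z : K) * algebraMap (𝓞 K) K b = algebraMap (𝓞 K) K a ∧
    π a = π ((u : 𝓞 K) * (n : 𝓞 K) * b)}
  one_mem' := ⟨1, 1, 1, 1, isCoprime_one_left, by simp, by simp, by simp⟩
  mul_mem' := by
    rintro z w ⟨a1, b1, u1, n1, hc1, hb1, hz1, ha1⟩ ⟨a2, b2, u2, n2, hc2, hb2, hz2, ha2⟩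
    refine ⟨a1 * a2, b1 * b2, u1 * u2, n1 * n2, hc1.mul_left hc2, ?_, ?_, ?_⟩
    · rw [map_mul]; exact hb1.mul hb2
    · rw [Units.val_mul, map_mul, map_mul]
      calc (z : K) * w * ((algebraMap (𝓞 K) K) b1 * (algebraMap (𝓞 K) K) b2)
          = ((z : K) * (algebraMap (𝓞 K) K) b1) * ((w : K) * (algebraMap (𝓞 K) K) b2) := by ring
        _ = _ := by rw [hz1, hz2]
    · rw [map_mul, ha1, ha2, ← map_mul]
      congr 1
      push_cast
      ring
  inv_mem' := by
    rintro z ⟨a, b, u, n, hc, hb, hz, ha⟩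
    obtain ⟨c, hcc, hcn⟩ := bezout_inv K N hc
    refine ⟨b, a, u⁻¹, c, hcc, ?_, ?_, ?_⟩
    · rw [ha, map_mul, map_mul]
      exact (((Units.isUnit u).map (Ideal.Quotient.mk (Ideal.span {(N : 𝓞 K)}))).mul
        (isUnit_int_mk K N hc)).mul hb
    · rw [Units.val_inv_eq_inv_val, ← hz]
      field_simp
    · have hu : π ((u⁻¹ : (𝓞 K)ˣ) : 𝓞 K) * π ((u : 𝓞 K)) = 1 := by
        rw [← map_mul, Units.inv_mul, map_one]
      have hcn' : π ((c : 𝓞 K)) * π ((n : 𝓞 K)) = 1 := by rw [← map_mul]; exact hcn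
      calc π b = (π ((u⁻¹ : (𝓞 K)ˣ) : 𝓞 K) * π ((u : 𝓞 K))) *
            (π ((c : 𝓞 K)) * π ((n : 𝓞 K))) * π b := by rw [hu, hcn']; ring
        _ = π ((u⁻¹ : (𝓞 K)ˣ) : 𝓞 K) * π ((c : 𝓞 K)) *
            (π ((u : 𝓞 K)) * π ((n : 𝓞 K)) * π b) := by ring
        _ = π ((u⁻¹ : (𝓞 K)ˣ) : 𝓞 K) * π ((c : 𝓞 K)) * π ((u : 𝓞 K) * (n : 𝓞 K) * b) := by
            rw [map_mul, map_mul]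
        _ = _ := by rw [← ha, ← map_mul, ← map_mul]

lemma mem_ker_iff (y : Kˣ) :
    y ∈ (toPrincipalIdeal (𝓞 K) K).ker ↔ ∃ u : (𝓞 K)ˣ, algebraMap (𝓞 K) K u = (y : K) := by
  rw [MonoidHom.mem_ker]
  constructor
  · intro h
    have h1 : FractionalIdeal.spanSingleton (𝓞 K)⁰ (y : K) = 1 := by
      rw [← coe_toPrincipalIdeal, h, Units.val_one]
    rw [← FractionalIdeal.spanSingleton_one (S := (𝓞 K)⁰),
      FractionalIdeal.spanSingleton_eq_spanSingleton] at h1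
    obtain ⟨z, hz⟩ := h1
    refine ⟨z⁻¹, ?_⟩
    rw [Units.smul_def, Algebra.smul_def] at hz
    have hz' : algebraMap (𝓞 K) K ((z⁻¹ : (𝓞 K)ˣ) : 𝓞 K) * (algebraMap (𝓞 K) K (z : 𝓞 K) * (y : K)) =
        algebraMap (𝓞 K) K ((z⁻¹ : (𝓞 K)ˣ) : 𝓞 K) * 1 := by rw [hz]
    rw [← mul_assoc, ← map_mul, Units.inv_mul, map_one, one_mul, mul_one] at hz'
    exact hz'.symm
  · rintro ⟨u, hu⟩
    apply Units.ext
    rw [coe_toPrincipalIdeal, Units.val_one, ← FractionalIdeal.spanSingleton_one (S := (𝓞 K)⁰),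
      FractionalIdeal.spanSingleton_eq_spanSingleton]
    refine ⟨u⁻¹, ?_⟩
    rw [Units.smul_def, Algebra.smul_def, ← hu, ← map_mul, Units.inv_mul, map_one]

end Aux

theorem kernel_of_PsiTilde (K : Type*) [Field K] [NumberField K]
    (h2 : Module.finrank ℚ K = 2)
    (him : ∀ v : InfinitePlace K, v.IsComplex)
    (N : ℕ) (hN : 0 < N) (f : Ideal (𝓞 K)) (hf : f = Ideal.span {(N : 𝓞 K)})
    (x : 𝓞 K) (hx0 : (algebraMap (𝓞 K) K x : K) ≠ 0)
    (hx : IsUnit (Ideal.Quotient.mk f x)) :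
    toPrincipalIdeal (𝓞 K) K (Units.mk0 _ hx0) ∈ PKZ K N ↔
      ∃ u : (𝓞 K)ˣ, ∃ n : ℤ, IsCoprime n (N : ℤ) ∧
        Ideal.Quotient.mk f x = Ideal.Quotient.mk f ((u : 𝓞 K) * (n : 𝓞 K)) := by
  subst hf
  set π := Ideal.Quotient.mk (Ideal.span {(N : 𝓞 K)}) with hπ
  set φ := toPrincipalIdeal (𝓞 K) K with hφ
  set A : Set Kˣ := {y | ∃ a : 𝓞 K, ∃ ha : (algebraMap (𝓞 K) K a : K) ≠ 0, ∃ n : ℤ,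
    IsCoprime n (N : ℤ) ∧ π a = ((n : 𝓞 K) : 𝓞 K ⧸ Ideal.span {(N : 𝓞 K)}) ∧
    y = Units.mk0 _ ha} with hA
  have hset : {J | ∃ a : 𝓞 K, ∃ ha : (algebraMap (𝓞 K) K a : K) ≠ 0, ∃ n : ℤ,
      IsCoprime n (N : ℤ) ∧ π a = ((n : 𝓞 K) : 𝓞 K ⧸ Ideal.span {(N : 𝓞 K)}) ∧
      J = φ (Units.mk0 _ ha)} = φ '' A := by
    ext J
    simp only [Set.mem_image, Set.mem_setOf_eq, hA]
    constructor
    · rintro ⟨a, ha, n, h1, h2, rfl⟩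
      exact ⟨Units.mk0 _ ha, ⟨a, ha, n, h1, h2, rfl⟩, rfl⟩
    · rintro ⟨y, ⟨a, ha, n, h1, h2, rfl⟩, rfl⟩
      exact ⟨a, ha, n, h1, h2, rfl⟩
  have hPKZ : PKZ K N = Subgroup.map φ (Subgroup.closure A) := by
    rw [PKZ, hset, MonoidHom.map_closure]
  rw [hPKZ, show φ (Units.mk0 _ hx0) ∈ Subgroup.map φ (Subgroup.closure A) ↔
      Units.mk0 _ hx0 ∈ Subgroup.closure A ⊔ φ.ker from by
    rw [← Subgroup.mem_comap, Subgroup.comap_map_eq]]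
  constructor
  · intro h
    have hsub : Subgroup.closure A ⊔ φ.ker ≤ Cgrp K N := by
      apply sup_le
      · rw [Subgroup.closure_le]
        rintro y ⟨a, ha, n, h1, h2, rfl⟩
        refine ⟨a, 1, 1, n, h1, by simp, by simp, ?_⟩
        rw [h2]; congr 1; simp
      · rintro y hy
        obtain ⟨u, hu⟩ := (mem_ker_iff K y).1 hy
        exact ⟨(u : 𝓞 K), 1, u, 1, isCoprime_one_left, by simp, by simp [hu], by
          congr 1; simp⟩
    obtain ⟨a, b, u, n, hcop, hbU, hzb, hab⟩ := hsub h
    rw [Units.val_mk0] at hzb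
    have hxb : x * b = a := by
      apply IsFractionRing.injective (𝓞 K) K
      rw [map_mul]; exact hzb
    refine ⟨u, n, hcop, ?_⟩
    have hc := congrArg π hxb
    rw [map_mul, hab, map_mul, map_mul] at hc
    rw [map_mul]
    exact hbU.mul_right_cancel (by rw [← map_mul] at hc ⊢; exact hc)
  · rintro ⟨u, n, hcop, heq⟩
    set y : 𝓞 K := ((u⁻¹ : (𝓞 K)ˣ) : 𝓞 K) * x with hy
    have hy0 : (algebraMap (𝓞 K) K y : K) ≠ 0 := by
      rw [hy, map_mul]
      refine mul_ne_zero (fun h0 => ?_) hx0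
      exact Units.ne_zero u⁻¹ (IsFractionRing.injective (𝓞 K) K (by rw [h0, map_zero]))
    have hyn : π y = ((n : 𝓞 K) : 𝓞 K ⧸ Ideal.span {(N : 𝓞 K)}) := by
      rw [hy, map_mul, heq, ← map_mul]
      show π _ = π _
      congr 1
      rw [← mul_assoc, Units.inv_mul, one_mul]
    apply Subgroup.mem_sup.2
    refine ⟨Units.mk0 _ hy0, Subgroup.subset_closure ⟨y, hy0, n, hcop, hyn, rfl⟩,
      Units.map (algebraMap (𝓞 K) K).toMonoidHom u, (mem_ker_iff K _).2 ⟨u, rfl⟩, ?_⟩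
    apply Units.ext
    rw [Units.val_mul, Units.val_mk0, Units.coe_map, Units.val_mk0]
    show algebraMap (𝓞 K) K y * algebraMap (𝓞 K) K (u : 𝓞 K) = _
    rw [← map_mul]
    congr 1
    rw [hy, mul_comm, ← mul_assoc, Units.mul_inv, one_mul]
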